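/- Strong LP duality for the one-stage risk-averse problem: if the primal problem min { z : z ≥ ⟨q^k, θ⟩ ∀k; θ_j ≥ ⟨c_j, y_j⟩ + V(x_j) ∀j; A_j x_j + B_j x₀ + T_j y_j = d_j ∀j; 0 ≤ x_j ≤ x̄; 0 ≤ y_j ≤ ȳ } with polyhedral convex V is feasible with finite value, then its value equals the value of the dual problem sup over (φ ∈ Δ_K, γ, λ, μ ≥ 0, ζ ≥ 0, ξ ≥ 0) with γ_j = Σ_k φ_k q^k_j and γ_j c_j + T_jᵀ λ_j + ξ_j ≥ 0, of Σ_j [ λ_jᵀ(B_j x₀ − d_j) − x̄ᵀζ_j − ȳᵀξ_j + inf_{x_j} ( ⟨A_jᵀλ_j − μ_j + ζ_j, x_j⟩ + γ_j V(x_j) ) ]. -/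

import Mathlib

open scoped BigOperators
open scoped RealInnerProductSpace

section ConeClosed
variable {E : Type*} [NormedAddCommGroup E] [InnerProductSpace ℝ E] [FiniteDimensional ℝ E]
variable {ι : Type*} [Fintype ι] [DecidableEq ι]

variable {E : Type*} [NormedAddCommGroup E] [InnerProductSpace ℝ E] [FiniteDimensional ℝ E]
variable {ι : Type*} [Fintype ι] [DecidableEq ι]

/-- the independent-generators case: a simplicial cone is closed. -/
lemma cone_closed_indep (v : ι → E) (s : Finset ι)
    (hli : LinearIndependent ℝ (fun i : ↥s => v i)) :
    IsClosed {x : E | ∃ u : ι → ℝ, (∀ i, 0 ≤ u i) ∧ (∀ i ∉ s, u i = 0) ∧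
      x = ∑ i, u i • v i} := by
  classical
  let f : (↥s → ℝ) →ₗ[ℝ] E :=
    { toFun := fun u => ∑ i, u i • v (i : ι)
      map_add' := by
        intro u u'; simp [add_smul, Finset.sum_add_distrib]
      map_smul' := by
        intro t u; simp [Finset.smul_sum, smul_smul] }
  have hinj : Function.Injective f := by
    rw [← LinearMap.ker_eq_bot, eq_bot_iff]
    intro u hu
    have h0 : ∑ i, u i • v (i : ι) = 0 := hu
    have := Fintype.linearIndependent_iff.mp hli u h0
    have : u = 0 := funext this
    simp [this]
  have hemb := LinearMap.isClosedEmbedding_of_injective (LinearMap.ker_eq_bot.mpr hinj)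
  have horth : IsClosed {u : ↥s → ℝ | ∀ i, 0 ≤ u i} := by
    have : {u : ↥s → ℝ | ∀ i, 0 ≤ u i} = ⋂ i, {u | 0 ≤ u i} := by
      ext u; simp
    rw [this]
    exact isClosed_iInter fun i => isClosed_le continuous_const (continuous_apply i)
  have himg : {x : E | ∃ u : ι → ℝ, (∀ i, 0 ≤ u i) ∧ (∀ i ∉ s, u i = 0) ∧
      x = ∑ i, u i • v i} = f '' {u : ↥s → ℝ | ∀ i, 0 ≤ u i} := by
    ext x
    constructor
    · rintro ⟨u, hu0, husupp, rfl⟩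
      refine ⟨fun i => u i.1, fun i => hu0 i.1, ?_⟩
      show ∑ i : ↥s, u i.1 • v i.1 = ∑ i, u i • v i
      rw [Finset.sum_coe_sort s (fun i => u i • v i)]
      apply Finset.sum_subset s.subset_univ
      intro i _ hi
      rw [husupp i hi, zero_smul]
    · rintro ⟨u, hu0, rfl⟩
      refine ⟨fun i => if h : i ∈ s then u ⟨i, h⟩ else 0, fun i => ?_,
        fun i hi => dif_neg hi, ?_⟩
      · by_cases h : i ∈ s
        · simpa [h] using hu0 ⟨i, h⟩
        · simp [h]
      · show ∑ i : ↥s, u i • v i.1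
            = ∑ i : ι, (if h : i ∈ s then u ⟨i, h⟩ else 0) • v i
        rw [← Finset.sum_subset s.subset_univ (fun i _ hi => by
            rw [dif_neg hi, zero_smul]),
          ← Finset.sum_coe_sort s
            (fun i => (if h : i ∈ s then u ⟨i, h⟩ else 0) • v i)]
        exact Finset.sum_congr rfl fun i _ => by rw [dif_pos i.2]
  rw [himg]
  exact hemb.isClosedMap _ horth

lemma cone_closed_aux (v : ι → E) :
    ∀ (N : ℕ) (s : Finset ι), s.card ≤ N →
      IsClosed {x : E | ∃ u : ι → ℝ, (∀ i, 0 ≤ u i) ∧ (∀ i ∉ s, u i = 0) ∧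
        x = ∑ i, u i • v i} := by
  intro N
  induction N with
  | zero =>
    intro s hs
    have hs' : s = ∅ := Finset.card_eq_zero.mp (Nat.le_zero.mp hs)
    subst hs'
    apply cone_closed_indep
    haveI : IsEmpty ↥(∅ : Finset ι) := ⟨fun x => absurd x.2 (Finset.notMem_empty _)⟩
    exact linearIndependent_empty_type
  | succ N ih =>
    intro s hs
    by_cases hli : LinearIndependent ℝ (fun i : ↥s => v i)
    · exact cone_closed_indep v s hli
    · obtain ⟨t, g, hrel, i₀, hi₀t, hgi₀⟩ := not_linearIndependent_iff.mp hli
      set G : ι → ℝ := fun i => if h : i ∈ s then (if ⟨i, h⟩ ∈ t then g ⟨i, h⟩ else 0) else 0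
        with hG
      have hGsupp : ∀ i ∉ s, G i = 0 := by intro i hi; simp [hG, hi]
      have hGrel : ∑ i, G i • v i = 0 := by
        rw [← Finset.sum_subset s.subset_univ (fun i _ hi => by
            rw [hGsupp i hi, zero_smul]),
          ← Finset.sum_coe_sort s (fun i => G i • v i)]
        have heq : ∀ i : ↥s, G i.1 • v i.1 = if i ∈ t then g i • v i.1 else 0 := by
          intro i
          by_cases h : i ∈ t <;> simp [hG, i.2, h]
        rw [Finset.sum_congr rfl fun i _ => heq i]
        rw [Finset.sum_ite_mem, Finset.univ_inter]
        exact hrel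
      have hGne : ∃ i ∈ s, G i ≠ 0 := ⟨i₀.1, i₀.2, by simp [hG, i₀.2, hi₀t, hgi₀]⟩
      obtain ⟨g', hg'supp, hg'rel, i₁, hi₁s, hi₁neg⟩ :
          ∃ g' : ι → ℝ, (∀ i ∉ s, g' i = 0) ∧ (∑ i, g' i • v i = 0) ∧
            ∃ i ∈ s, g' i < 0 := by
        obtain ⟨i, his, hine⟩ := hGne
        rcases lt_or_gt_of_ne hine with h | h
        · exact ⟨G, hGsupp, hGrel, i, his, h⟩
        · refine ⟨-G, fun i hi => by simp [hGsupp i hi], ?_, i, his, by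
            simpa using h⟩
          have : ∑ i, (-G) i • v i = -∑ i, G i • v i := by
            rw [← Finset.sum_neg_distrib]
            exact Finset.sum_congr rfl fun i _ => by simp
          rw [this, hGrel, neg_zero]
      have hunion : {x : E | ∃ u : ι → ℝ, (∀ i, 0 ≤ u i) ∧ (∀ i ∉ s, u i = 0) ∧
            x = ∑ i, u i • v i} =
          ⋃ i ∈ s, {x : E | ∃ u : ι → ℝ, (∀ i', 0 ≤ u i') ∧ (∀ i' ∉ s.erase i, u i' = 0) ∧
            x = ∑ i', u i' • v i'} := by
        ext x
        constructor
        · rintro ⟨u, hu0, husupp, rfl⟩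
          have hne : (s.filter (fun i => g' i < 0)).Nonempty :=
            ⟨i₁, Finset.mem_filter.mpr ⟨hi₁s, hi₁neg⟩⟩
          obtain ⟨istar, histarmem, histarmin⟩ :=
            Finset.exists_min_image (s.filter (fun i => g' i < 0))
              (fun i => u i / (-g' i)) hne
          rw [Finset.mem_filter] at histarmem
          obtain ⟨histars, histarneg⟩ := histarmem
          set τ : ℝ := u istar / (-g' istar) with hτ
          have hτ0 : 0 ≤ τ := div_nonneg (hu0 _) (by linarith)
          refine Set.mem_biUnion histars ⟨fun i => u i + τ * g' i, ?_, ?_, ?_⟩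
          · intro i
            show 0 ≤ u i + τ * g' i
            by_cases hneg : g' i < 0
            · by_cases his : i ∈ s
              · have hle := histarmin i (Finset.mem_filter.mpr ⟨his, hneg⟩)
                rw [div_le_div_iff₀ (by linarith) (by linarith)] at hle
                have h2 : u istar * (-g' i) / (-g' istar) ≤ u i :=
                  (div_le_iff₀ (by linarith)).mpr (by linarith)
                have h3 : u i + τ * g' i = u i - u istar * (-g' i) / (-g' istar) := by
                  rw [hτ]; ring
                linarith
              · rw [hg'supp i his]; simpa using hu0 i
            · push_neg at hneg
              nlinarith [hu0 i]
          · intro i hi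
            show u i + τ * g' i = 0
            by_cases his : i ∈ s
            · have hii : i = istar := by
                by_contra hne'
                exact hi (Finset.mem_erase.mpr ⟨hne', his⟩)
              subst hii
              have hgne : g' i ≠ 0 := ne_of_lt histarneg
              rw [hτ]
              rw [div_mul_eq_mul_div, div_neg, mul_div_assoc, div_self hgne, mul_one]
              ring
            · rw [husupp i his, hg'supp i his]; ring
          · show ∑ i, u i • v i = ∑ i', (u i' + τ * g' i') • v i'
            rw [Finset.sum_congr rfl (fun i _ => add_smul (u i) (τ * g' i) (v i)),
              Finset.sum_add_distrib]
            have : ∑ i, (τ * g' i) • v i = τ • ∑ i, g' i • v i := by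
              rw [Finset.smul_sum]
              exact Finset.sum_congr rfl fun i _ => by rw [smul_smul]
            rw [this, hg'rel, smul_zero, add_zero]
        · intro hx
          rw [Set.mem_iUnion₂] at hx
          obtain ⟨i, his, u, hu0, husupp, rfl⟩ := hx
          exact ⟨u, hu0, fun i' hi' =>
            husupp i' (fun hmem => hi' (Finset.mem_of_mem_erase hmem)), rfl⟩
      rw [hunion]
      apply isClosed_biUnion_finset
      intro i his
      apply ih
      have := Finset.card_erase_of_mem his
      omega
end ConeClosed

/-- swap a transpose-dot-product. -/
lemma dot_swap {m' n' : ℕ} (Mm : Matrix (Fin m') (Fin n') ℝ) (lamv : Fin m' → ℝ)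
    (xv : Fin n' → ℝ) :
    ∑ l, (Mm.transpose.mulVec lamv) l * xv l = ∑ i2, lamv i2 * Mm.mulVec xv i2 := by
  simp only [Matrix.mulVec, dotProduct, Matrix.transpose_apply, Finset.sum_mul,
    Finset.mul_sum]
  rw [Finset.sum_comm]
  exact Finset.sum_congr rfl fun i _ => Finset.sum_congr rfl fun l _ => by ring

lemma mulVec_eq_sum {m' n' : ℕ} (Mm : Matrix (Fin m') (Fin n') ℝ) (xv : Fin n' → ℝ)
    (i : Fin m') : Mm.mulVec xv i = ∑ l, Mm i l * xv l := rfl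
section Farkas
variable {E : Type*} [NormedAddCommGroup E] [InnerProductSpace ℝ E] [FiniteDimensional ℝ E]

lemma pi_sum_apply {κ ι : Type*} [Fintype κ] [Fintype ι]
    (f : κ → EuclideanSpace ℝ ι) (j : ι) : (∑ i, f i) j = ∑ i, f i j :=
  by rw [WithLp.ofLp_sum]; exact Finset.sum_apply j Finset.univ _

lemma farkas_cone {κ : Type*} [Fintype κ] (v : κ → E) (c : E)
    (h : ∀ w : E, (∀ i, 0 ≤ ⟪v i, w⟫) → 0 ≤ ⟪c, w⟫) :
    ∃ u : κ → ℝ, (∀ i, 0 ≤ u i) ∧ c = ∑ i, u i • v i := by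
  classical
  set Cset : Set E := {x : E | ∃ u : κ → ℝ, (∀ i, 0 ≤ u i) ∧ x = ∑ i, u i • v i} with hCset
  have hclosed : IsClosed Cset := by
    have h1 := cone_closed_aux v (Finset.univ.card) Finset.univ le_rfl
    have h2 : Cset = {x : E | ∃ u : κ → ℝ, (∀ i, 0 ≤ u i) ∧
        (∀ i ∉ (Finset.univ : Finset κ), u i = 0) ∧ x = ∑ i, u i • v i} := by
      ext x
      constructor
      · rintro ⟨u, hu, rfl⟩; exact ⟨u, hu, fun i hi => absurd (Finset.mem_univ i) hi, rfl⟩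
      · rintro ⟨u, hu, _, rfl⟩; exact ⟨u, hu, rfl⟩
    rw [h2]; exact h1
  by_contra hnc
  push_neg at hnc
  have hcnot : c ∉ Cset := by
    rintro ⟨u, hu, hcu⟩
    exact hnc u hu hcu
  let K : ConvexCone ℝ E :=
    { carrier := Cset
      smul_mem' := by
        rintro t ht x ⟨u, hu, rfl⟩
        refine ⟨fun i => t * u i, fun i => mul_nonneg ht.le (hu i), ?_⟩
        rw [Finset.smul_sum]
        refine Finset.sum_congr rfl fun i _ => ?_
        show t • (u i • v i) = (t * u i) • v i
        rw [smul_smul]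
      add_mem' := by
        rintro x ⟨u, hu, rfl⟩ y ⟨u', hu', rfl⟩
        refine ⟨fun i => u i + u' i, fun i => add_nonneg (hu i) (hu' i), ?_⟩
        rw [← Finset.sum_add_distrib]
        refine Finset.sum_congr rfl fun i _ => ?_
        show u i • v i + u' i • v i = (u i + u' i) • v i
        rw [add_smul] }
  have hKne : (K : Set E).Nonempty := ⟨0, ⟨fun _ => 0, fun _ => le_rfl, by simp⟩⟩
  haveI : CompleteSpace E := FiniteDimensional.complete ℝ E
  obtain ⟨y, hy1, hy2⟩ :=
    ProperCone.hyperplane_separation' (E := E)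
      ⟨K.toPointedCone (by exact ⟨fun _ => 0, fun _ => le_rfl, by simp⟩), hclosed⟩ hcnot
  have hvy : ∀ i, 0 ≤ ⟪v i, y⟫ := by
    intro i
    apply hy1
    show v i ∈ Cset
    refine ⟨fun j => if j = i then 1 else 0, fun j => by positivity, ?_⟩
    simp [ite_smul]
  have := h y hvy
  rw [real_inner_comm] at this
  linarith [real_inner_comm y c]

lemma affine_farkas {ι κ : Type*} [Fintype ι] [Fintype κ]
    (G : κ → ι → ℝ) (h : κ → ℝ) (c : ι → ℝ) (vstar : ℝ)
    (hfeas : ∃ w : ι → ℝ, ∀ i, h i ≤ ∑ l, G i l * w l)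
    (hval : ∀ w : ι → ℝ, (∀ i, h i ≤ ∑ l, G i l * w l) → vstar ≤ ∑ l, c l * w l) :
    ∃ u : κ → ℝ, (∀ i, 0 ≤ u i) ∧ (∀ l, ∑ i, u i * G i l = c l) ∧
      vstar ≤ ∑ i, u i * h i := by
  classical
  set E' := EuclideanSpace ℝ (Option ι) with hE'
  set vv : Option κ → E' := fun o => match o with
    | none => WithLp.toLp 2 (fun o' : Option ι => match o' with | none => 1 | some _ => 0)
    | some i => WithLp.toLp 2 (fun o' : Option ι => match o' with | none => -h i | some l => G i l) with hvv
  set cc : E' := WithLp.toLp 2 (fun o' : Option ι => match o' with | none => -vstar | some l => c l) with hcc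
  have hinner : ∀ x y : E', ⟪x, y⟫ = x none * y none + ∑ l, x (some l) * y (some l) := by
    intro x y
    rw [PiLp.inner_apply]
    simp only [RCLike.inner_apply, conj_trivial]
    rw [Fintype.sum_option]
    exact congrArg₂ (· + ·) (mul_comm _ _) (Finset.sum_congr rfl fun _ _ => mul_comm _ _)
  have key : ∀ w' : E', (∀ i, 0 ≤ ⟪vv i, w'⟫) → 0 ≤ ⟪cc, w'⟫ := by
    intro w' hw'
    set t := w' none with ht
    set w : ι → ℝ := fun l => w' (some l) with hw
    have htnn : 0 ≤ t := by
      have := hw' none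
      rw [hinner] at this
      simpa [hvv] using this
    have hrow : ∀ i, 0 ≤ -h i * t + ∑ l, G i l * w l := by
      intro i
      have := hw' (some i)
      rwa [hinner] at this
    rw [hinner]
    show 0 ≤ -vstar * t + ∑ l, c l * w l
    rcases eq_or_lt_of_le htnn with ht0 | htpos
    · -- t = 0
      have hGw : ∀ i, 0 ≤ ∑ l, G i l * w l := by
        intro i; have := hrow i; rw [← ht0] at this; linarith
      rw [← ht0, mul_zero, zero_add]
      by_contra hcw
      push_neg at hcw
      obtain ⟨w₀, hw₀⟩ := hfeas
      have hC0 : vstar ≤ ∑ l, c l * w₀ l := hval w₀ hw₀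
      set S := ∑ l, c l * w l with hS
      set C0 := ∑ l, c l * w₀ l with hC0d
      set s : ℝ := (C0 - vstar + 1) / (-S) with hs
      have hsnn : 0 ≤ s := div_nonneg (by linarith) (by linarith)
      have hfeass : ∀ i, h i ≤ ∑ l, G i l * (w₀ l + s * w l) := by
        intro i
        have : ∑ l, G i l * (w₀ l + s * w l)
            = (∑ l, G i l * w₀ l) + s * ∑ l, G i l * w l := by
          rw [Finset.mul_sum, ← Finset.sum_add_distrib]
          exact Finset.sum_congr rfl fun l _ => by ring
        rw [this]
        have := hGw i
        nlinarith [hw₀ i]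
      have hvs := hval _ hfeass
      have hsplit : ∑ l, c l * (w₀ l + s * w l) = C0 + s * S := by
        rw [hC0d, hS, Finset.mul_sum, ← Finset.sum_add_distrib]
        exact Finset.sum_congr rfl fun l _ => by ring
      rw [hsplit] at hvs
      have hscancel : s * (-S) = C0 - vstar + 1 := by
        rw [hs]
        exact div_mul_cancel₀ _ (by linarith : (-S) ≠ 0)
      have hflip : s * (-S) = -(s * S) := by ring
      linarith
    · -- t > 0
      have hfeast : ∀ i, h i ≤ ∑ l, G i l * (w l / t) := by
        intro i
        have hsum : ∑ l, G i l * (w l / t) = (∑ l, G i l * w l) / t := by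
          rw [Finset.sum_div]
          exact Finset.sum_congr rfl fun l _ => (mul_div_assoc _ _ _).symm
        rw [hsum, le_div_iff₀ htpos]
        have := hrow i
        linarith
      have hv := hval _ hfeast
      have hsum : ∑ l, c l * (w l / t) = (∑ l, c l * w l) / t := by
        rw [Finset.sum_div]
        exact Finset.sum_congr rfl fun l _ => (mul_div_assoc _ _ _).symm
      rw [hsum, le_div_iff₀ htpos] at hv
      nlinarith
  obtain ⟨u', hu'0, hcu'⟩ := farkas_cone vv cc key
  refine ⟨fun i => u' (some i), fun i => hu'0 _, ?_, ?_⟩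
  · intro l
    have h1 : cc (some l) = (∑ o, u' o • vv o) (some l) := by rw [← hcu']
    rw [pi_sum_apply] at h1
    have h2 : ∀ o : Option κ, (u' o • vv o) (some l) = u' o * vv o (some l) := fun o => rfl
    rw [Fintype.sum_option] at h1
    simp only [h2] at h1
    have h3 : cc (some l) = c l := rfl
    have h4 : vv none (some l) = 0 := rfl
    rw [h3, h4, mul_zero, zero_add] at h1
    rw [← h1]
  · have h1 : cc none = (∑ o, u' o • vv o) none := by rw [← hcu']
    rw [pi_sum_apply, Fintype.sum_option] at h1
    have h2 : ∀ o : Option κ, (u' o • vv o) none = u' o * vv o none := fun o => rfl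
    simp only [h2] at h1
    have h3 : cc none = -vstar := rfl
    have h4 : vv none none = 1 := rfl
    rw [h3, h4, mul_one] at h1
    have h5 : ∑ i, u' (some i) * vv (some i) none = ∑ i, u' (some i) * (-h i) :=
      Finset.sum_congr rfl fun i _ => rfl
    rw [h5] at h1
    have h6 : ∑ i, u' (some i) * h i = vstar + u' none := by
      have : ∑ i, u' (some i) * (-h i) = -∑ i, u' (some i) * h i := by
        rw [← Finset.sum_neg_distrib]
        exact Finset.sum_congr rfl fun i _ => by ring
      rw [this] at h1
      linarith
    rw [h6]
    linarith [hu'0 none]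
end Farkas

lemma sum_prod_delta {α β : Type*} [Fintype α] [Fintype β] [DecidableEq α] (j : α)
    (F : α × β → ℝ) :
    ∑ ab : α × β, (if ab.1 = j then F ab else 0) = ∑ b, F (j, b) := by
  rw [Fintype.sum_prod_type, Finset.sum_eq_single j]
  · simp
  · intro a _ ha
    simp [ha]
  · intro h; exact absurd (Finset.mem_univ j) h

lemma sum_prod_delta' {α β : Type*} [Fintype α] [Fintype β] [DecidableEq α] (j : α)
    (F : α × β → ℝ) :
    ∑ ab : α × β, (if j = ab.1 then F ab else 0) = ∑ b, F (j, b) := by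
  rw [Fintype.sum_prod_type, Finset.sum_eq_single j]
  · simp
  · intro a _ ha
    simp [Ne.symm ha]
  · intro h; exact absurd (Finset.mem_univ j) h

set_option maxHeartbeats 1000000 in
/-- Strong LP duality for the one-stage risk-averse problem with a polyhedral
risk measure and a polyhedral convex cost-to-go function `V`: if the primal is
feasible with finite value, then its value equals the value of the dual. -/
theorem one_stage_risk_averse_strong_duality
    (n p m J K : ℕ) (q : Fin K → Fin J → ℝ)
    (hq0 : ∀ k j, 0 ≤ q k j) (hq1 : ∀ k, ∑ j, q k j = 1)
    (A B : Fin J → Matrix (Fin m) (Fin n) ℝ) (T : Fin J → Matrix (Fin m) (Fin p) ℝ)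
    (c : Fin J → Fin p → ℝ) (d : Fin J → Fin m → ℝ)
    (xbar : Fin n → ℝ) (ybar : Fin p → ℝ) (x₀ : Fin n → ℝ)
    -- V is a polyhedral (piecewise-linear) convex function:
    (M : ℕ) (hM : 0 < M) (aV : Fin M → Fin n → ℝ) (bV : Fin M → ℝ)
    (V : (Fin n → ℝ) → ℝ) (hV : ∀ x, V x = ⨆ i : Fin M, ((∑ l, aV i l * x l) + bV i))
    -- primal objective value set:
    (P : Set ℝ)
    (hP : P = {z : ℝ | ∃ (x : Fin J → Fin n → ℝ) (y : Fin J → Fin p → ℝ)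
        (θ : Fin J → ℝ),
      (∀ k, ∑ j, q k j * θ j ≤ z) ∧
      (∀ j, (∑ i, c j i * y j i) + V (x j) ≤ θ j) ∧
      (∀ j, (A j).mulVec (x j) + (B j).mulVec x₀ + (T j).mulVec (y j) = d j) ∧
      (∀ j l, 0 ≤ x j l ∧ x j l ≤ xbar l) ∧
      (∀ j i, 0 ≤ y j i ∧ y j i ≤ ybar i)})
    -- dual objective value set:
    (D : Set ℝ)
    (hD : D = {v : ℝ | ∃ (φ : Fin K → ℝ) (γ : Fin J → ℝ)
        (lam : Fin J → Fin m → ℝ) (μ ζ : Fin J → Fin n → ℝ) (ξ : Fin J → Fin p → ℝ),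
      (∀ k, 0 ≤ φ k) ∧ (∑ k, φ k = 1) ∧
      (∀ j, γ j = ∑ k, φ k * q k j) ∧
      (∀ j l, 0 ≤ μ j l) ∧ (∀ j l, 0 ≤ ζ j l) ∧ (∀ j i, 0 ≤ ξ j i) ∧
      (∀ j i, 0 ≤ γ j * c j i + ((T j).transpose.mulVec (lam j)) i + ξ j i) ∧
      (∀ j, BddBelow {w : ℝ | ∃ x : Fin n → ℝ,
        w = (∑ l, ((A j).transpose.mulVec (lam j) - μ j + ζ j) l * x l) + γ j * V x}) ∧
      v = ∑ j, ((∑ i2, lam j i2 * ((B j).mulVec x₀ - d j) i2)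
            - (∑ l, xbar l * ζ j l) - (∑ i, ybar i * ξ j i)
            + sInf {w : ℝ | ∃ x : Fin n → ℝ,
                w = (∑ l, ((A j).transpose.mulVec (lam j) - μ j + ζ j) l * x l)
                      + γ j * V x})})
    (hfeas : P.Nonempty) (hbdd : BddBelow P) :
    sInf P = sSup D := by
  classical
  haveI : Nonempty (Fin M) := Fin.pos_iff_nonempty.mp hM
  have hVub : ∀ (x : Fin n → ℝ) (i : Fin M), (∑ l, aV i l * x l) + bV i ≤ V x := by
    intro x i
    rw [hV x]
    exact le_ciSup (f := fun i : Fin M => (∑ l, aV i l * x l) + bV i)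
      (Set.Finite.bddAbove (Set.finite_range _)) i
  have hVsup : ∀ (x : Fin n → ℝ) (r : ℝ), (∀ i, (∑ l, aV i l * x l) + bV i ≤ r) → V x ≤ r := by
    intro x r hr
    rw [hV x]
    exact ciSup_le hr
  -- ======================= WEAK DUALITY =======================
  have hweak : ∀ v ∈ D, ∀ z ∈ P, v ≤ z := by
    intro v hv z hz
    rw [hD] at hv
    obtain ⟨φ, γ, lam, μ, ζ, ξ, hφ0, hφ1, hγ, hμ, hζ, hξ, hcon, hbddW, hveq⟩ := hv
    rw [hP] at hz
    obtain ⟨x, y, θ, hzk, hθ, heqc, hxb, hyb⟩ := hz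
    have hγ0 : ∀ j, 0 ≤ γ j := by
      intro j
      rw [hγ j]
      exact Finset.sum_nonneg fun k _ => mul_nonneg (hφ0 k) (hq0 k j)
    -- per-scenario bound
    have hterm : ∀ j, (∑ i2, lam j i2 * ((B j).mulVec x₀ - d j) i2)
            - (∑ l, xbar l * ζ j l) - (∑ i, ybar i * ξ j i)
            + sInf {w : ℝ | ∃ x' : Fin n → ℝ,
                w = (∑ l, ((A j).transpose.mulVec (lam j) - μ j + ζ j) l * x' l)
                      + γ j * V x'} ≤ γ j * θ j := by
      intro j
      have hInf : sInf {w : ℝ | ∃ x' : Fin n → ℝ,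
          w = (∑ l, ((A j).transpose.mulVec (lam j) - μ j + ζ j) l * x' l)
                + γ j * V x'} ≤
          (∑ l, ((A j).transpose.mulVec (lam j) - μ j + ζ j) l * x j l) + γ j * V (x j) :=
        csInf_le (hbddW j) ⟨x j, rfl⟩
      -- expand the linear term
      have hr : ∀ l, ((A j).transpose.mulVec (lam j) - μ j + ζ j) l
          = ((A j).transpose.mulVec (lam j)) l - μ j l + ζ j l := fun l => rfl
      have hrsum : ∑ l, ((A j).transpose.mulVec (lam j) - μ j + ζ j) l * x j l
          = (∑ l, ((A j).transpose.mulVec (lam j)) l * x j l)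
            - (∑ l, μ j l * x j l) + (∑ l, ζ j l * x j l) := by
        rw [← Finset.sum_sub_distrib, ← Finset.sum_add_distrib]
        exact Finset.sum_congr rfl fun l _ => by rw [hr]; ring
      -- equality constraint
      have hBd : ∀ i2, ((B j).mulVec x₀ - d j) i2
          = -((A j).mulVec (x j) i2) - ((T j).mulVec (y j) i2) := by
        intro i2
        have := congrFun (heqc j) i2
        have h2 : (A j).mulVec (x j) i2 + (B j).mulVec x₀ i2 + (T j).mulVec (y j) i2
            = d j i2 := this
        show (B j).mulVec x₀ i2 - d j i2 = _
        linarith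
      have hL : ∑ i2, lam j i2 * ((B j).mulVec x₀ - d j) i2
          = -(∑ i2, lam j i2 * (A j).mulVec (x j) i2)
            - (∑ i2, lam j i2 * (T j).mulVec (y j) i2) := by
        rw [← Finset.sum_neg_distrib, ← Finset.sum_sub_distrib]
        exact Finset.sum_congr rfl fun i2 _ => by rw [hBd i2]; ring
      have hswapA : ∑ l, ((A j).transpose.mulVec (lam j)) l * x j l
          = ∑ i2, lam j i2 * (A j).mulVec (x j) i2 := dot_swap _ _ _
      have hswapT : ∑ i, ((T j).transpose.mulVec (lam j)) i * y j i
          = ∑ i2, lam j i2 * (T j).mulVec (y j) i2 := dot_swap _ _ _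
      -- inequalities
      have hμx : 0 ≤ ∑ l, μ j l * x j l :=
        Finset.sum_nonneg fun l _ => mul_nonneg (hμ j l) (hxb j l).1
      have hζx : ∑ l, ζ j l * x j l ≤ ∑ l, xbar l * ζ j l := by
        apply Finset.sum_le_sum
        intro l _
        rw [mul_comm (xbar l)]
        exact mul_le_mul_of_nonneg_left (hxb j l).2 (hζ j l)
      have hξy : ∑ i, ξ j i * y j i ≤ ∑ i, ybar i * ξ j i := by
        apply Finset.sum_le_sum
        intro i _
        rw [mul_comm (ybar i)]
        exact mul_le_mul_of_nonneg_left (hyb j i).2 (hξ j i)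
      have hcony : 0 ≤ ∑ i, (γ j * c j i + ((T j).transpose.mulVec (lam j)) i + ξ j i) * y j i :=
        Finset.sum_nonneg fun i _ => mul_nonneg (hcon j i) (hyb j i).1
      have hconyexp : ∑ i, (γ j * c j i + ((T j).transpose.mulVec (lam j)) i + ξ j i) * y j i
          = γ j * (∑ i, c j i * y j i) + (∑ i, ((T j).transpose.mulVec (lam j)) i * y j i)
            + ∑ i, ξ j i * y j i := by
        rw [Finset.mul_sum, ← Finset.sum_add_distrib, ← Finset.sum_add_distrib]
        exact Finset.sum_congr rfl fun i _ => by ring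
      have hθj : γ j * ((∑ i, c j i * y j i) + V (x j)) ≤ γ j * θ j :=
        mul_le_mul_of_nonneg_left (hθ j) (hγ0 j)
      -- combine everything linearly
      rw [hrsum] at hInf
      rw [hconyexp] at hcony
      rw [hswapT] at hcony
      nlinarith [hInf, hL, hswapA, hμx, hζx, hξy, hcony, hθj]
    -- sum over j
    have hsum : v ≤ ∑ j, γ j * θ j := by
      rw [hveq]
      exact Finset.sum_le_sum fun j _ => hterm j
    have hexch : ∑ j, γ j * θ j = ∑ k, φ k * ∑ j, q k j * θ j := by
      rw [Finset.sum_congr rfl fun j (_ : j ∈ Finset.univ) => by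
        rw [hγ j, Finset.sum_mul]]
      rw [Finset.sum_comm]
      exact Finset.sum_congr rfl fun k _ => by
        rw [Finset.mul_sum]
        exact Finset.sum_congr rfl fun j _ => by ring
    have hlast : ∑ k, φ k * ∑ j, q k j * θ j ≤ z := by
      calc ∑ k, φ k * ∑ j, q k j * θ j ≤ ∑ k, φ k * z :=
            Finset.sum_le_sum fun k _ => mul_le_mul_of_nonneg_left (hzk k) (hφ0 k)
        _ = z := by rw [← Finset.sum_mul, hφ1, one_mul]
    linarith [hsum, hexch.le, hexch.ge, hlast]
  -- ======================= STRONG PART =======================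
  -- LP matrix data
  set Gm : (Fin K ⊕ ((Fin J × Fin M) ⊕ (((Fin J × Fin m) ⊕ (Fin J × Fin m)) ⊕
        (((Fin J × Fin n) ⊕ (Fin J × Fin n)) ⊕ ((Fin J × Fin p) ⊕ (Fin J × Fin p)))))) →
      (Unit ⊕ (Fin J ⊕ ((Fin J × Fin n) ⊕ (Fin J × Fin p)))) → ℝ :=
    Sum.elim
      (fun k => Sum.elim (fun _ => (1:ℝ))
        (Sum.elim (fun j => -q k j) (Sum.elim (fun _ => 0) (fun _ => 0))))
      (Sum.elim
        (fun ji => Sum.elim (fun _ => 0)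
          (Sum.elim (fun j' => if j' = ji.1 then 1 else 0)
            (Sum.elim (fun jl => if jl.1 = ji.1 then -aV ji.2 jl.2 else 0)
              (fun jy => if jy.1 = ji.1 then -c ji.1 jy.2 else 0))))
        (Sum.elim
          (Sum.elim
            (fun jr => Sum.elim (fun _ => 0)
              (Sum.elim (fun _ => 0)
                (Sum.elim (fun jl => if jl.1 = jr.1 then A jr.1 jr.2 jl.2 else 0)
                  (fun jy => if jy.1 = jr.1 then T jr.1 jr.2 jy.2 else 0))))
            (fun jr => Sum.elim (fun _ => 0)
              (Sum.elim (fun _ => 0)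
                (Sum.elim (fun jl => if jl.1 = jr.1 then -A jr.1 jr.2 jl.2 else 0)
                  (fun jy => if jy.1 = jr.1 then -T jr.1 jr.2 jy.2 else 0)))))
          (Sum.elim
            (Sum.elim
              (fun jl0 => Sum.elim (fun _ => 0)
                (Sum.elim (fun _ => 0)
                  (Sum.elim (fun jl => if jl = jl0 then 1 else 0) (fun _ => 0))))
              (fun jl0 => Sum.elim (fun _ => 0)
                (Sum.elim (fun _ => 0)
                  (Sum.elim (fun jl => if jl = jl0 then -1 else 0) (fun _ => 0)))))
            (Sum.elim
              (fun jy0 => Sum.elim (fun _ => 0)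
                (Sum.elim (fun _ => 0)
                  (Sum.elim (fun _ => 0) (fun jy => if jy = jy0 then 1 else 0))))
              (fun jy0 => Sum.elim (fun _ => 0)
                (Sum.elim (fun _ => 0)
                  (Sum.elim (fun _ => 0) (fun jy => if jy = jy0 then -1 else 0))))))))
    with hGm
  set hvec : (Fin K ⊕ ((Fin J × Fin M) ⊕ (((Fin J × Fin m) ⊕ (Fin J × Fin m)) ⊕
        (((Fin J × Fin n) ⊕ (Fin J × Fin n)) ⊕ ((Fin J × Fin p) ⊕ (Fin J × Fin p)))))) → ℝ :=
    Sum.elim (fun _ => (0:ℝ))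
      (Sum.elim (fun ji => bV ji.2)
        (Sum.elim
          (Sum.elim (fun jr => d jr.1 jr.2 - (B jr.1).mulVec x₀ jr.2)
            (fun jr => (B jr.1).mulVec x₀ jr.2 - d jr.1 jr.2))
          (Sum.elim
            (Sum.elim (fun _ => 0) (fun jl0 => -xbar jl0.2))
            (Sum.elim (fun _ => 0) (fun jy0 => -ybar jy0.2)))))
    with hhv
  set cobj : (Unit ⊕ (Fin J ⊕ ((Fin J × Fin n) ⊕ (Fin J × Fin p)))) → ℝ :=
    Sum.elim (fun _ => (1:ℝ)) (fun _ => 0) with hcobj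
  -- sum expansion lemmas
  have hsumv : ∀ f : (Unit ⊕ (Fin J ⊕ ((Fin J × Fin n) ⊕ (Fin J × Fin p)))) → ℝ,
      ∑ lv, f lv = f (Sum.inl ()) + ((∑ j, f (Sum.inr (Sum.inl j)))
        + ((∑ jl : Fin J × Fin n, f (Sum.inr (Sum.inr (Sum.inl jl))))
          + (∑ jy : Fin J × Fin p, f (Sum.inr (Sum.inr (Sum.inr jy)))))) := by
    intro f
    simp [Fintype.sum_sum_type]
  have hsumc : ∀ f : (Fin K ⊕ ((Fin J × Fin M) ⊕ (((Fin J × Fin m) ⊕ (Fin J × Fin m)) ⊕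
        (((Fin J × Fin n) ⊕ (Fin J × Fin n)) ⊕ ((Fin J × Fin p) ⊕ (Fin J × Fin p)))))) → ℝ,
      ∑ i, f i = (∑ k, f (Sum.inl k))
        + ((∑ ji : Fin J × Fin M, f (Sum.inr (Sum.inl ji)))
          + (((∑ jr : Fin J × Fin m, f (Sum.inr (Sum.inr (Sum.inl (Sum.inl jr)))))
              + (∑ jr : Fin J × Fin m, f (Sum.inr (Sum.inr (Sum.inl (Sum.inr jr))))))
            + (((∑ jl : Fin J × Fin n, f (Sum.inr (Sum.inr (Sum.inr (Sum.inl (Sum.inl jl))))))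
                + (∑ jl : Fin J × Fin n, f (Sum.inr (Sum.inr (Sum.inr (Sum.inl (Sum.inr jl)))))))
              + ((∑ jy : Fin J × Fin p, f (Sum.inr (Sum.inr (Sum.inr (Sum.inr (Sum.inl jy))))))
                + (∑ jy : Fin J × Fin p, f (Sum.inr (Sum.inr (Sum.inr (Sum.inr (Sum.inr jy)))))))))) := by
    intro f
    simp [Fintype.sum_sum_type]
  -- row dot-product lemmas
  have hd1 : ∀ (k : Fin K) (w : _ → ℝ), ∑ lv, Gm (Sum.inl k) lv * w lv
      = w (Sum.inl ()) - ∑ j, q k j * w (Sum.inr (Sum.inl j)) := by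
    intro k w
    rw [hsumv]
    simp [hGm, neg_mul, Finset.sum_neg_distrib]
    ring
  have hd2 : ∀ (j : Fin J) (i : Fin M) (w : _ → ℝ),
      ∑ lv, Gm (Sum.inr (Sum.inl (j, i))) lv * w lv
      = w (Sum.inr (Sum.inl j))
        - (∑ i2, c j i2 * w (Sum.inr (Sum.inr (Sum.inr (j, i2)))))
        - ∑ l, aV i l * w (Sum.inr (Sum.inr (Sum.inl (j, l)))) := by
    intro j i w
    rw [hsumv]
    simp [hGm, ite_mul, zero_mul, sum_prod_delta, Finset.sum_ite_eq', neg_mul,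
      Finset.sum_neg_distrib]
    ring
  have hd3 : ∀ (j : Fin J) (r : Fin m) (w : _ → ℝ),
      ∑ lv, Gm (Sum.inr (Sum.inr (Sum.inl (Sum.inl (j, r))))) lv * w lv
      = (∑ l, A j r l * w (Sum.inr (Sum.inr (Sum.inl (j, l)))))
        + ∑ i2, T j r i2 * w (Sum.inr (Sum.inr (Sum.inr (j, i2)))) := by
    intro j r w
    rw [hsumv]
    simp [hGm, ite_mul, zero_mul, sum_prod_delta]
  have hd4 : ∀ (j : Fin J) (r : Fin m) (w : _ → ℝ),
      ∑ lv, Gm (Sum.inr (Sum.inr (Sum.inl (Sum.inr (j, r))))) lv * w lv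
      = -(∑ l, A j r l * w (Sum.inr (Sum.inr (Sum.inl (j, l)))))
        - ∑ i2, T j r i2 * w (Sum.inr (Sum.inr (Sum.inr (j, i2)))) := by
    intro j r w
    rw [hsumv]
    simp [hGm, ite_mul, zero_mul, sum_prod_delta, neg_mul, Finset.sum_neg_distrib]
    ring
  have hd5 : ∀ (j : Fin J) (l : Fin n) (w : _ → ℝ),
      ∑ lv, Gm (Sum.inr (Sum.inr (Sum.inr (Sum.inl (Sum.inl (j, l)))))) lv * w lv
      = w (Sum.inr (Sum.inr (Sum.inl (j, l)))) := by
    intro j l w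
    rw [hsumv]
    simp [hGm, ite_mul, zero_mul, Finset.sum_ite_eq']
  have hd6 : ∀ (j : Fin J) (l : Fin n) (w : _ → ℝ),
      ∑ lv, Gm (Sum.inr (Sum.inr (Sum.inr (Sum.inl (Sum.inr (j, l)))))) lv * w lv
      = -w (Sum.inr (Sum.inr (Sum.inl (j, l)))) := by
    intro j l w
    rw [hsumv]
    simp [hGm, ite_mul, zero_mul, Finset.sum_ite_eq']
  have hd7 : ∀ (j : Fin J) (i : Fin p) (w : _ → ℝ),
      ∑ lv, Gm (Sum.inr (Sum.inr (Sum.inr (Sum.inr (Sum.inl (j, i)))))) lv * w lv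
      = w (Sum.inr (Sum.inr (Sum.inr (j, i)))) := by
    intro j i w
    rw [hsumv]
    simp [hGm, ite_mul, zero_mul, Finset.sum_ite_eq']
  have hd8 : ∀ (j : Fin J) (i : Fin p) (w : _ → ℝ),
      ∑ lv, Gm (Sum.inr (Sum.inr (Sum.inr (Sum.inr (Sum.inr (j, i)))))) lv * w lv
      = -w (Sum.inr (Sum.inr (Sum.inr (j, i)))) := by
    intro j i w
    rw [hsumv]
    simp [hGm, ite_mul, zero_mul, Finset.sum_ite_eq']
  have hdc : ∀ w : _ → ℝ, ∑ lv, cobj lv * w lv = w (Sum.inl ()) := by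
    intro w
    rw [hsumv]
    simp [hcobj]
  -- LP feasibility
  have hfeasLP : ∃ w : (Unit ⊕ (Fin J ⊕ ((Fin J × Fin n) ⊕ (Fin J × Fin p)))) → ℝ,
      ∀ i, hvec i ≤ ∑ lv, Gm i lv * w lv := by
    obtain ⟨z₁, hz₁⟩ := hfeas
    rw [hP] at hz₁
    obtain ⟨x, y, θ, hzk, hθ, heqc, hxb, hyb⟩ := hz₁
    refine ⟨Sum.elim (fun _ => z₁) (Sum.elim θ
      (Sum.elim (fun jl => x jl.1 jl.2) (fun jy => y jy.1 jy.2))), ?_⟩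
    rintro (k | (⟨j, i⟩ | ((⟨j, r⟩ | ⟨j, r⟩) | ((⟨j, l⟩ | ⟨j, l⟩) | (⟨j, i⟩ | ⟨j, i⟩)))))
    · rw [hd1]
      simp only [Sum.elim_inl, Sum.elim_inr, hhv]
      have := hzk k
      linarith
    · rw [hd2]
      simp only [Sum.elim_inl, Sum.elim_inr, hhv]
      have h1 := hθ j
      have h2 := hVub (x j) i
      have h3 : ∑ i2, c j i2 * y j i2 = ∑ i2, c j i2 * y j i2 := rfl
      linarith
    · rw [hd3]
      simp only [Sum.elim_inl, Sum.elim_inr, hhv]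
      have hc := congrFun (heqc j) r
      simp only [Pi.add_apply] at hc
      rw [mulVec_eq_sum, mulVec_eq_sum (T j)] at hc
      linarith
    · rw [hd4]
      simp only [Sum.elim_inl, Sum.elim_inr, hhv]
      have hc := congrFun (heqc j) r
      simp only [Pi.add_apply] at hc
      rw [mulVec_eq_sum, mulVec_eq_sum (T j)] at hc
      linarith
    · rw [hd5]
      simp only [Sum.elim_inl, Sum.elim_inr, hhv]
      exact (hxb j l).1
    · rw [hd6]
      simp only [Sum.elim_inl, Sum.elim_inr, hhv]
      have := (hxb j l).2
      linarith
    · rw [hd7]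
      simp only [Sum.elim_inl, Sum.elim_inr, hhv]
      exact (hyb j i).1
    · rw [hd8]
      simp only [Sum.elim_inl, Sum.elim_inr, hhv]
      have := (hyb j i).2
      linarith
  -- LP value bound
  have hvalLP : ∀ w : (Unit ⊕ (Fin J ⊕ ((Fin J × Fin n) ⊕ (Fin J × Fin p)))) → ℝ,
      (∀ i, hvec i ≤ ∑ lv, Gm i lv * w lv) →
      sInf P ≤ ∑ lv, cobj lv * w lv := by
    intro w hw
    rw [hdc]
    apply csInf_le hbdd
    rw [hP]
    refine ⟨fun j l => w (Sum.inr (Sum.inr (Sum.inl (j, l)))),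
      fun j i => w (Sum.inr (Sum.inr (Sum.inr (j, i)))),
      fun j => w (Sum.inr (Sum.inl j)), ?_, ?_, ?_, ?_, ?_⟩
    · intro k
      have := hw (Sum.inl k)
      rw [hd1] at this
      simp only [hhv, Sum.elim_inl] at this
      linarith
    · intro j
      have hVle : V (fun l => w (Sum.inr (Sum.inr (Sum.inl (j, l)))))
          ≤ w (Sum.inr (Sum.inl j))
            - ∑ i2, c j i2 * w (Sum.inr (Sum.inr (Sum.inr (j, i2)))) := by
        apply hVsup
        intro i
        have := hw (Sum.inr (Sum.inl (j, i)))
        rw [hd2] at this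
        simp only [hhv, Sum.elim_inl, Sum.elim_inr] at this
        linarith
      linarith
    · intro j
      funext r
      have h3 := hw (Sum.inr (Sum.inr (Sum.inl (Sum.inl (j, r)))))
      rw [hd3] at h3
      simp only [hhv, Sum.elim_inl, Sum.elim_inr] at h3
      have h4 := hw (Sum.inr (Sum.inr (Sum.inl (Sum.inr (j, r)))))
      rw [hd4] at h4
      simp only [hhv, Sum.elim_inl, Sum.elim_inr] at h4
      show (A j).mulVec _ r + (B j).mulVec x₀ r + (T j).mulVec _ r = d j r
      rw [mulVec_eq_sum, mulVec_eq_sum (T j)]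
      linarith
    · intro j l
      constructor
      · have := hw (Sum.inr (Sum.inr (Sum.inr (Sum.inl (Sum.inl (j, l))))))
        rw [hd5] at this
        simp only [hhv, Sum.elim_inl, Sum.elim_inr] at this
        linarith
      · have := hw (Sum.inr (Sum.inr (Sum.inr (Sum.inl (Sum.inr (j, l))))))
        rw [hd6] at this
        simp only [hhv, Sum.elim_inl, Sum.elim_inr] at this
        linarith
    · intro j i
      constructor
      · have := hw (Sum.inr (Sum.inr (Sum.inr (Sum.inr (Sum.inl (j, i))))))
        rw [hd7] at this
        simp only [hhv, Sum.elim_inl, Sum.elim_inr] at this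
        linarith
      · have := hw (Sum.inr (Sum.inr (Sum.inr (Sum.inr (Sum.inr (j, i))))))
        rw [hd8] at this
        simp only [hhv, Sum.elim_inl, Sum.elim_inr] at this
        linarith
  obtain ⟨u, hu0, hueq, huval⟩ := affine_farkas Gm hvec cobj (sInf P) hfeasLP hvalLP
  -- coordinate equations from the dual
  have hcz : ∑ k, u (Sum.inl k) = 1 := by
    have h0 := hueq (Sum.inl ())
    rw [hsumc] at h0
    simp only [hGm, hcobj, Sum.elim_inl, Sum.elim_inr, mul_one, mul_zero,
      Finset.sum_const_zero, add_zero, zero_add] at h0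
    exact h0
  have hθeq : ∀ j, ∑ i, u (Sum.inr (Sum.inl (j, i))) = ∑ k, u (Sum.inl k) * q k j := by
    intro j
    have h0 := hueq (Sum.inr (Sum.inl j))
    rw [hsumc] at h0
    simp only [hGm, hcobj, Sum.elim_inl, Sum.elim_inr, mul_ite, mul_zero, mul_one,
      mul_neg, ite_mul, zero_mul, one_mul, neg_mul, sum_prod_delta, sum_prod_delta',
      Finset.sum_ite_eq, Finset.sum_ite_eq', Finset.mem_univ, if_true,
      Finset.sum_neg_distrib, Finset.sum_const_zero, add_zero, zero_add] at h0
    linarith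
  have hxceq : ∀ j l, ∑ i, u (Sum.inr (Sum.inl (j, i))) * aV i l
      = (∑ r, u (Sum.inr (Sum.inr (Sum.inl (Sum.inl (j, r))))) * A j r l)
        - (∑ r, u (Sum.inr (Sum.inr (Sum.inl (Sum.inr (j, r))))) * A j r l)
        + u (Sum.inr (Sum.inr (Sum.inr (Sum.inl (Sum.inl (j, l))))))
        - u (Sum.inr (Sum.inr (Sum.inr (Sum.inl (Sum.inr (j, l)))))) := by
    intro j l
    have h0 := hueq (Sum.inr (Sum.inr (Sum.inl (j, l))))
    rw [hsumc] at h0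
    simp only [hGm, hcobj, Sum.elim_inl, Sum.elim_inr, mul_ite, mul_zero, mul_one,
      mul_neg, ite_mul, zero_mul, one_mul, neg_mul, sum_prod_delta, sum_prod_delta',
      Finset.sum_ite_eq, Finset.sum_ite_eq', Finset.mem_univ, if_true,
      Finset.sum_neg_distrib, Finset.sum_const_zero, add_zero, zero_add] at h0
    linarith
  have hyceq : ∀ j i, ∑ i2, u (Sum.inr (Sum.inl (j, i2))) * c j i
      = (∑ r, u (Sum.inr (Sum.inr (Sum.inl (Sum.inl (j, r))))) * T j r i)
        - (∑ r, u (Sum.inr (Sum.inr (Sum.inl (Sum.inr (j, r))))) * T j r i)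
        + u (Sum.inr (Sum.inr (Sum.inr (Sum.inr (Sum.inl (j, i))))))
        - u (Sum.inr (Sum.inr (Sum.inr (Sum.inr (Sum.inr (j, i)))))) := by
    intro j i
    have h0 := hueq (Sum.inr (Sum.inr (Sum.inr (j, i))))
    rw [hsumc] at h0
    simp only [hGm, hcobj, Sum.elim_inl, Sum.elim_inr, mul_ite, mul_zero, mul_one,
      mul_neg, ite_mul, zero_mul, one_mul, neg_mul, sum_prod_delta, sum_prod_delta',
      Finset.sum_ite_eq, Finset.sum_ite_eq', Finset.mem_univ, if_true,
      Finset.sum_neg_distrib, Finset.sum_const_zero, add_zero, zero_add] at h0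
    linarith
  -- the multipliers
  set φv : Fin K → ℝ := fun k => u (Sum.inl k) with hφv
  set lamv : Fin J → Fin m → ℝ := fun j r =>
    u (Sum.inr (Sum.inr (Sum.inl (Sum.inr (j, r)))))
      - u (Sum.inr (Sum.inr (Sum.inl (Sum.inl (j, r))))) with hlamv
  set μv : Fin J → Fin n → ℝ := fun j l =>
    u (Sum.inr (Sum.inr (Sum.inr (Sum.inl (Sum.inl (j, l)))))) with hμv
  set ζv : Fin J → Fin n → ℝ := fun j l =>
    u (Sum.inr (Sum.inr (Sum.inr (Sum.inl (Sum.inr (j, l)))))) with hζv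
  set ξv : Fin J → Fin p → ℝ := fun j i =>
    u (Sum.inr (Sum.inr (Sum.inr (Sum.inr (Sum.inr (j, i)))))) with hξv
  set γv : Fin J → ℝ := fun j => ∑ k, φv k * q k j with hγv
  have hγσ : ∀ j, γv j = ∑ i, u (Sum.inr (Sum.inl (j, i))) := by
    intro j
    simp only [hγv, hφv]
    exact (hθeq j).symm
  have hAT : ∀ j l, ((A j).transpose.mulVec (lamv j)) l
      = (∑ r, u (Sum.inr (Sum.inr (Sum.inl (Sum.inr (j, r))))) * A j r l)
        - ∑ r, u (Sum.inr (Sum.inr (Sum.inl (Sum.inl (j, r))))) * A j r l := by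
    intro j l
    rw [mulVec_eq_sum, ← Finset.sum_sub_distrib]
    refine Finset.sum_congr rfl fun r _ => ?_
    simp only [Matrix.transpose_apply, hlamv]
    ring
  have hTT : ∀ j i, ((T j).transpose.mulVec (lamv j)) i
      = (∑ r, u (Sum.inr (Sum.inr (Sum.inl (Sum.inr (j, r))))) * T j r i)
        - ∑ r, u (Sum.inr (Sum.inr (Sum.inl (Sum.inl (j, r))))) * T j r i := by
    intro j i
    rw [mulVec_eq_sum, ← Finset.sum_sub_distrib]
    refine Finset.sum_congr rfl fun r _ => ?_
    simp only [Matrix.transpose_apply, hlamv]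
    ring
  have hrr : ∀ j l, ((A j).transpose.mulVec (lamv j) - μv j + ζv j) l
      = -∑ i, u (Sum.inr (Sum.inl (j, i))) * aV i l := by
    intro j l
    show ((A j).transpose.mulVec (lamv j)) l - μv j l + ζv j l = _
    rw [hAT j l]
    simp only [hμv, hζv]
    linarith [hxceq j l]
  -- lower bound for the inner inf sets
  have hWcore : ∀ j (x' : Fin n → ℝ),
      ∑ i, u (Sum.inr (Sum.inl (j, i))) * bV i ≤
        (∑ l, ((A j).transpose.mulVec (lamv j) - μv j + ζv j) l * x' l) + γv j * V x' := by
    intro j x'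
    have h1 : ∑ l, ((A j).transpose.mulVec (lamv j) - μv j + ζv j) l * x' l
        = -∑ i, u (Sum.inr (Sum.inl (j, i))) * ∑ l, aV i l * x' l := by
      rw [Finset.sum_congr rfl fun l (_ : l ∈ Finset.univ) => by rw [hrr j l]]
      have hterm : ∀ l, (-∑ i, u (Sum.inr (Sum.inl (j, i))) * aV i l) * x' l
          = -∑ i, u (Sum.inr (Sum.inl (j, i))) * (aV i l * x' l) := by
        intro l
        rw [neg_mul, Finset.sum_mul]
        congr 1
        exact Finset.sum_congr rfl fun i _ => by ring
      rw [Finset.sum_congr rfl fun l (_ : l ∈ Finset.univ) => hterm l,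
        Finset.sum_neg_distrib, Finset.sum_comm]
      congr 1
      exact Finset.sum_congr rfl fun i _ => by rw [Finset.mul_sum]
    have h2 : γv j * V x' = ∑ i, u (Sum.inr (Sum.inl (j, i))) * V x' := by
      rw [hγσ j, Finset.sum_mul]
    have h3 : ∑ i, u (Sum.inr (Sum.inl (j, i))) * ((∑ l, aV i l * x' l) + bV i)
        ≤ ∑ i, u (Sum.inr (Sum.inl (j, i))) * V x' :=
      Finset.sum_le_sum fun i _ => mul_le_mul_of_nonneg_left (hVub x' i) (hu0 _)
    have h4 : ∑ i, u (Sum.inr (Sum.inl (j, i))) * ((∑ l, aV i l * x' l) + bV i)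
        = (∑ i, u (Sum.inr (Sum.inl (j, i))) * ∑ l, aV i l * x' l)
          + ∑ i, u (Sum.inr (Sum.inl (j, i))) * bV i := by
      rw [← Finset.sum_add_distrib]
      exact Finset.sum_congr rfl fun i _ => by ring
    rw [h1, h2]
    linarith
  have hWne : ∀ j, Set.Nonempty {w : ℝ | ∃ x : Fin n → ℝ,
      w = (∑ l, ((A j).transpose.mulVec (lamv j) - μv j + ζv j) l * x l) + γv j * V x} :=
    fun j => ⟨_, ⟨0, rfl⟩⟩
  have hWbdd : ∀ j, BddBelow {w : ℝ | ∃ x : Fin n → ℝ,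
      w = (∑ l, ((A j).transpose.mulVec (lamv j) - μv j + ζv j) l * x l) + γv j * V x} := by
    intro j
    refine ⟨∑ i, u (Sum.inr (Sum.inl (j, i))) * bV i, ?_⟩
    rintro w ⟨x', rfl⟩
    exact hWcore j x'
  have hInfW : ∀ j, ∑ i, u (Sum.inr (Sum.inl (j, i))) * bV i ≤
      sInf {w : ℝ | ∃ x : Fin n → ℝ,
        w = (∑ l, ((A j).transpose.mulVec (lamv j) - μv j + ζv j) l * x l) + γv j * V x} := by
    intro j
    apply le_csInf (hWne j)
    rintro w ⟨x', rfl⟩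
    exact hWcore j x'
  -- restate the dual value bound
  have hval2 : sInf P ≤ ∑ j, ((∑ i, u (Sum.inr (Sum.inl (j, i))) * bV i)
      + (∑ r, lamv j r * ((B j).mulVec x₀ r - d j r))
      - (∑ l, xbar l * ζv j l) - (∑ i, ybar i * ξv j i)) := by
    rw [hsumc] at huval
    have b1 : ∑ k, u (Sum.inl k) * hvec (Sum.inl k) = 0 := by simp [hhv]
    have b2 : ∑ ji : Fin J × Fin M, u (Sum.inr (Sum.inl ji)) * hvec (Sum.inr (Sum.inl ji))
        = ∑ j, ∑ i, u (Sum.inr (Sum.inl (j, i))) * bV i := by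
      rw [Fintype.sum_prod_type]
      simp only [hhv, Sum.elim_inl, Sum.elim_inr]
    have b3 : ∑ jr : Fin J × Fin m, u (Sum.inr (Sum.inr (Sum.inl (Sum.inl jr))))
          * hvec (Sum.inr (Sum.inr (Sum.inl (Sum.inl jr))))
        = ∑ j, ∑ r, u (Sum.inr (Sum.inr (Sum.inl (Sum.inl (j, r)))))
            * (d j r - (B j).mulVec x₀ r) := by
      rw [Fintype.sum_prod_type]
      simp only [hhv, Sum.elim_inl, Sum.elim_inr]
    have b4 : ∑ jr : Fin J × Fin m, u (Sum.inr (Sum.inr (Sum.inl (Sum.inr jr))))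
          * hvec (Sum.inr (Sum.inr (Sum.inl (Sum.inr jr))))
        = ∑ j, ∑ r, u (Sum.inr (Sum.inr (Sum.inl (Sum.inr (j, r)))))
            * ((B j).mulVec x₀ r - d j r) := by
      rw [Fintype.sum_prod_type]
      simp only [hhv, Sum.elim_inl, Sum.elim_inr]
    have b5 : ∑ jl : Fin J × Fin n, u (Sum.inr (Sum.inr (Sum.inr (Sum.inl (Sum.inl jl)))))
          * hvec (Sum.inr (Sum.inr (Sum.inr (Sum.inl (Sum.inl jl))))) = 0 := by
      simp [hhv]
    have b6 : ∑ jl : Fin J × Fin n, u (Sum.inr (Sum.inr (Sum.inr (Sum.inl (Sum.inr jl)))))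
          * hvec (Sum.inr (Sum.inr (Sum.inr (Sum.inl (Sum.inr jl)))))
        = -∑ j, ∑ l, xbar l * u (Sum.inr (Sum.inr (Sum.inr (Sum.inl (Sum.inr (j, l)))))) := by
      rw [Fintype.sum_prod_type, ← Finset.sum_neg_distrib]
      refine Finset.sum_congr rfl fun j _ => ?_
      rw [← Finset.sum_neg_distrib]
      refine Finset.sum_congr rfl fun l _ => ?_
      simp only [hhv, Sum.elim_inl, Sum.elim_inr]
      ring
    have b7 : ∑ jy : Fin J × Fin p, u (Sum.inr (Sum.inr (Sum.inr (Sum.inr (Sum.inl jy)))))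
          * hvec (Sum.inr (Sum.inr (Sum.inr (Sum.inr (Sum.inl jy))))) = 0 := by
      simp [hhv]
    have b8 : ∑ jy : Fin J × Fin p, u (Sum.inr (Sum.inr (Sum.inr (Sum.inr (Sum.inr jy)))))
          * hvec (Sum.inr (Sum.inr (Sum.inr (Sum.inr (Sum.inr jy)))))
        = -∑ j, ∑ i, ybar i * u (Sum.inr (Sum.inr (Sum.inr (Sum.inr (Sum.inr (j, i)))))) := by
      rw [Fintype.sum_prod_type, ← Finset.sum_neg_distrib]
      refine Finset.sum_congr rfl fun j _ => ?_
      rw [← Finset.sum_neg_distrib]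
      refine Finset.sum_congr rfl fun i _ => ?_
      simp only [hhv, Sum.elim_inl, Sum.elim_inr]
      ring
    rw [b1, b2, b3, b4, b5, b6, b7, b8] at huval
    -- split the target sum
    have e0 : ∑ j, ((∑ i, u (Sum.inr (Sum.inl (j, i))) * bV i)
        + (∑ r, lamv j r * ((B j).mulVec x₀ r - d j r))
        - (∑ l, xbar l * ζv j l) - (∑ i, ybar i * ξv j i))
        = (∑ j, ∑ i, u (Sum.inr (Sum.inl (j, i))) * bV i)
          + (∑ j, ∑ r, lamv j r * ((B j).mulVec x₀ r - d j r))
          - (∑ j, ∑ l, xbar l * ζv j l) - (∑ j, ∑ i, ybar i * ξv j i) := by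
      simp only [Finset.sum_sub_distrib, Finset.sum_add_distrib]
    have e1 : ∑ j, ∑ r, lamv j r * ((B j).mulVec x₀ r - d j r)
        = (∑ j, ∑ r, u (Sum.inr (Sum.inr (Sum.inl (Sum.inl (j, r)))))
            * (d j r - (B j).mulVec x₀ r))
          + ∑ j, ∑ r, u (Sum.inr (Sum.inr (Sum.inl (Sum.inr (j, r)))))
            * ((B j).mulVec x₀ r - d j r) := by
      rw [← Finset.sum_add_distrib]
      refine Finset.sum_congr rfl fun j _ => ?_
      rw [← Finset.sum_add_distrib]
      refine Finset.sum_congr rfl fun r _ => ?_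
      simp only [hlamv]
      ring
    have e2 : ∑ j, ∑ l, xbar l * ζv j l
        = ∑ j, ∑ l, xbar l * u (Sum.inr (Sum.inr (Sum.inr (Sum.inl (Sum.inr (j, l)))))) := by
      simp only [hζv]
    have e3 : ∑ j, ∑ i, ybar i * ξv j i
        = ∑ j, ∑ i, ybar i * u (Sum.inr (Sum.inr (Sum.inr (Sum.inr (Sum.inr (j, i)))))) := by
      simp only [hξv]
    rw [e0, e1, e2, e3]
    linarith
  -- the dual element
  set vD : ℝ := ∑ j, ((∑ i2, lamv j i2 * ((B j).mulVec x₀ - d j) i2)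
      - (∑ l, xbar l * ζv j l) - (∑ i, ybar i * ξv j i)
      + sInf {w : ℝ | ∃ x : Fin n → ℝ,
          w = (∑ l, ((A j).transpose.mulVec (lamv j) - μv j + ζv j) l * x l)
                + γv j * V x}) with hvDdef
  have hvD_mem : vD ∈ D := by
    rw [hD]
    refine ⟨φv, γv, lamv, μv, ζv, ξv, ?_, ?_, ?_, ?_, ?_, ?_, ?_, ?_, ?_⟩
    · intro k; exact hu0 _
    · exact hcz
    · intro j; rfl
    · intro j l; exact hu0 _
    · intro j l; exact hu0 _
    · intro j i; exact hu0 _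
    · intro j i
      have hγc : γv j * c j i = ∑ i2, u (Sum.inr (Sum.inl (j, i2))) * c j i := by
        rw [hγσ j, Finset.sum_mul]
      rw [hγc, hTT j i]
      simp only [hξv]
      have := hyceq j i
      have h70 := hu0 (Sum.inr (Sum.inr (Sum.inr (Sum.inr (Sum.inl (j, i))))))
      linarith
    · exact hWbdd
    · exact hvDdef
  have hvD_ge : sInf P ≤ vD := by
    refine le_trans hval2 ?_
    rw [hvDdef]
    refine Finset.sum_le_sum fun j _ => ?_
    have e4 : ∑ i2, lamv j i2 * ((B j).mulVec x₀ - d j) i2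
        = ∑ r, lamv j r * ((B j).mulVec x₀ r - d j r) := rfl
    have := hInfW j
    linarith
  have hup : ∀ v ∈ D, v ≤ sInf P := fun v hv => le_csInf hfeas fun z hz => hweak v hv z hz
  refine le_antisymm ?_ ?_
  · exact le_trans hvD_ge (le_csSup ⟨sInf P, fun v hv => hup v hv⟩ hvD_mem)
  · exact csSup_le ⟨vD, hvD_mem⟩ hup
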